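/- Let R be the renormalization on probability measures on X̄ = X ∪ {∂}. Then for self-mappings f, f' of X and subsets S, S' ⊆ X, backward mappings satisfy R ∘ (f←_S)⋆ ∘ R ∘ (f'←_{S'})⋆ = R ∘ (f←_S ∘ f'←_{S'})⋆. -/

import Mathlib

open scoped Classical

/-- Backward mapping `f←_S : X̄ → X̄` (`∂` encoded by `none`): sends `x ∈ S` to `f x`,
every other point of `X` to `∂`, and `∂` to `∂`. -/
noncomputable def backward {X : Type*} (f : X → X) (S : Finset X) :
    Option X → Option X
  | none => none
  | some x => if x ∈ S then some (f x) else none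

/-- Pushforward of a finitely supported measure on `X̄` by a self-mapping of `X̄`. -/
noncomputable def push {X : Type*} [Fintype X] (g : Option X → Option X)
    (ν : Option X → NNReal) : Option X → NNReal :=
  fun o => ∑ o' ∈ Finset.univ.filter (fun o' => g o' = o), ν o'

/-- Renormalization: the normalized restriction of `ν` to `X` when `ν(X) ≠ 0`,
and the Dirac measure at the cemetery point `∂` otherwise. -/
noncomputable def renorm {X : Type*} [Fintype X] (ν : Option X → NNReal) :
    Option X → NNReal :=
  if (∑ x : X, ν (some x)) = 0 then (fun o => if o = none then 1 else 0)
  else fun o =>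
    match o with
    | none => 0
    | some x => ν (some x) / ∑ x : X, ν (some x)


lemma push_comp_aux {X : Type*} [Fintype X] (g g' : Option X → Option X)
    (ν : Option X → NNReal) : push g (push g' ν) = push (g ∘ g') ν := by
  funext o
  simp only [push, Function.comp_apply]
  rw [Finset.sum_fiberwise_eq_sum_filter]
  congr 1
  ext o''
  simp

lemma push_backward_some {X : Type*} [Fintype X] (f : X → X) (S : Finset X)
    (μ : Option X → NNReal) (y : X) :
    push (backward f S) μ (some y)
      = ∑ x ∈ Finset.univ.filter (fun x => x ∈ S ∧ f x = y), μ (some x) := by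
  rw [push, Finset.sum_filter, Finset.sum_filter, Fintype.sum_option]
  simp only [backward]
  simp only [reduceCtorEq, ite_false, zero_add]
  refine Finset.sum_congr rfl fun x _ => ?_
  by_cases hxS : x ∈ S <;> simp [hxS]

lemma renorm_div_aux {X : Type*} [Fintype X] (μ ν : Option X → NNReal) (m : NNReal)
    (hm : m ≠ 0) (h : ∀ x, ν (some x) = μ (some x) / m) :
    renorm ν = renorm μ := by
  have hs : ∑ x : X, ν (some x) = (∑ x : X, μ (some x)) / m := by
    calc ∑ x : X, ν (some x) = ∑ x : X, μ (some x) / m :=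
          Finset.sum_congr rfl fun x _ => h x
      _ = (∑ x : X, μ (some x)) / m := (Finset.sum_div ..).symm
  unfold renorm
  by_cases h0 : (∑ x : X, μ (some x)) = 0
  · simp [hs, h0]
  · have h0' : (∑ x : X, ν (some x)) ≠ 0 := by
      rw [hs]; exact div_ne_zero h0 hm
    rw [if_neg h0', if_neg h0]
    funext o
    cases o with
    | none => rfl
    | some x =>
      simp only [h x, hs]
      rw [div_div_div_cancel_right₀ hm]

lemma renorm_eq_dirac {X : Type*} [Fintype X] (μ : Option X → NNReal)
    (h : ∀ y : X, μ (some y) = 0) :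
    renorm μ = fun o => if o = none then 1 else 0 := by
  unfold renorm
  rw [if_pos (Finset.sum_eq_zero fun y _ => h y)]

lemma renorm_push_renorm {X : Type*} [Fintype X] (f : X → X) (S : Finset X)
    (ν : Option X → NNReal) :
    renorm (push (backward f S) (renorm ν)) = renorm (push (backward f S) ν) := by
  by_cases h0 : (∑ x : X, ν (some x)) = 0
  · have hz : ∀ x : X, ν (some x) = 0 := fun x =>
      (Finset.sum_eq_zero_iff.mp h0) x (Finset.mem_univ x)
    have h1 : ∀ y, push (backward f S) (renorm ν) (some y) = 0 := by
      intro y; rw [push_backward_some]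
      refine Finset.sum_eq_zero fun x _ => ?_
      simp [renorm, h0]
    have h2 : ∀ y, push (backward f S) ν (some y) = 0 := by
      intro y; rw [push_backward_some]
      exact Finset.sum_eq_zero fun x _ => hz x
    rw [renorm_eq_dirac _ h1, renorm_eq_dirac _ h2]
  · refine (renorm_div_aux _ _ _ h0 ?_)
    intro y
    rw [push_backward_some, push_backward_some, Finset.sum_div]
    refine Finset.sum_congr rfl fun x _ => ?_
    simp [renorm, h0]

/-- The renormalization factors out of compositions of pushforwards by backward
mappings: `R ∘ (f←_S)⋆ ∘ R ∘ (f'←_{S'})⋆ = R ∘ (f←_S ∘ f'←_{S'})⋆` on probability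
measures on `X̄`. -/
theorem renorm_push_backward_comp {X : Type*} [Fintype X]
    (f f' : X → X) (S S' : Finset X) :
    ∀ ν : Option X → NNReal, (∑ o : Option X, ν o = 1) →
      renorm (push (backward f S) (renorm (push (backward f' S') ν))) =
        renorm (push (backward f S ∘ backward f' S') ν) := by
  intro ν _
  rw [← push_comp_aux, renorm_push_renorm]
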